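/- arXiv:1010.4824 — 3 statements merged into one kernel-verified Lean document; each statement's English description precedes it below -/
import Mathlib

section
/- Markov chain through the belief: Let x take values in a standard Borel space X, y in a standard Borel space Y, with π(·) = P(x ∈ · | y) the regular conditional distribution. Then x and y are conditionally independent given π, i.e., for every bounded measurable f : X → ℝ, E[f(x) | y] = E[f(x) | π] almost surely (the conditional law of x given y coincides with the conditional law of x given σ(π)). -/
open MeasureTheory ProbabilityTheory

/-- Markov chain through the belief: the posterior `π(ω) = P(x ∈ · | y)(y ω)` is a
sufficient statistic of the observation `y` for the state `x`: for every bounded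
measurable `f`, `E[f(x) | y] = E[f(x) | π]` almost surely. -/
theorem condExp_eq_condExp_posterior
    {Ω X Y : Type*} [MeasurableSpace Ω]
    [MeasurableSpace X] [StandardBorelSpace X] [Nonempty X]
    [MeasurableSpace Y]
    (μ : Measure Ω) [IsProbabilityMeasure μ]
    (x : Ω → X) (hx : Measurable x) (y : Ω → Y) (hy : Measurable y)
    (f : X → ℝ) (hf : Measurable f) (C : ℝ) (hC : ∀ a, |f a| ≤ C) :
    μ[(fun ω => f (x ω)) | MeasurableSpace.comap y inferInstance]
      =ᵐ[μ]
    μ[(fun ω => f (x ω)) |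
      MeasurableSpace.comap (fun ω => condDistrib x y μ (y ω)) inferInstance] := by
  set κ := condDistrib x y μ with hκ
  set π : Ω → Measure X := fun ω => κ (y ω) with hπ
  -- the function ν ↦ ∫ f dν, expressed via lintegrals so it is measurable
  set g : Measure X → ℝ := fun ν =>
    (∫⁻ a, ENNReal.ofReal (f a) ∂ν).toReal - (∫⁻ a, ENNReal.ofReal (-f a) ∂ν).toReal with hg
  have hg_meas : Measurable g := by
    refine Measurable.sub ?_ ?_
    · exact (Measure.measurable_lintegral (hf.ennreal_ofReal)).ennreal_toReal
    · exact (Measure.measurable_lintegral (hf.neg.ennreal_ofReal)).ennreal_toReal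
  -- f is integrable w.r.t. any probability measure
  have hf_int : ∀ (ν : Measure X), IsProbabilityMeasure ν → Integrable f ν := by
    intro ν hν
    refine Integrable.mono' (integrable_const C) hf.aestronglyMeasurable ?_
    exact Filter.Eventually.of_forall fun a => by simpa using hC a
  have hg_eq : ∀ (ν : Measure X), IsProbabilityMeasure ν → g ν = ∫ a, f a ∂ν := by
    intro ν hν
    rw [hg, MeasureTheory.integral_eq_lintegral_pos_part_sub_lintegral_neg_part (hf_int ν hν)]
  -- π ω is always a probability measure
  have hπ_prob : ∀ ω, IsProbabilityMeasure (π ω) := fun ω => inferInstance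
  -- the integral function equals g ∘ π
  have h_fun_eq : (fun ω => ∫ a, f a ∂(π ω)) = g ∘ π := by
    funext ω; exact (hg_eq (π ω) (hπ_prob ω)).symm
  have hκ_meas : Measurable κ := Kernel.measurable κ
  have hπ_meas : Measurable π := hκ_meas.comp hy
  have hmπ_le_my : MeasurableSpace.comap π inferInstance
      ≤ MeasurableSpace.comap y inferInstance := by
    have h2 : MeasurableSpace.comap π (inferInstance : MeasurableSpace (Measure X))
        = MeasurableSpace.comap y (MeasurableSpace.comap κ inferInstance) := by
      rw [MeasurableSpace.comap_comp]; rfl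
    rw [h2]
    exact MeasurableSpace.comap_mono hκ_meas.comap_le
  have hmy_le : MeasurableSpace.comap y inferInstance ≤ ‹MeasurableSpace Ω› := hy.comap_le
  have hmπ_le : MeasurableSpace.comap π inferInstance ≤ ‹MeasurableSpace Ω› :=
    hmπ_le_my.trans hmy_le
  -- integrability of f ∘ x
  have h_int : Integrable (fun ω => f (x ω)) μ := by
    refine Integrable.mono' (integrable_const C) (hf.comp hx).aestronglyMeasurable ?_
    exact Filter.Eventually.of_forall fun ω => by simpa using hC (x ω)
  -- step 1: E[f(x) | y] = ∫ f dπ a.s.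
  have h1 : μ[(fun ω => f (x ω)) | MeasurableSpace.comap y inferInstance] =ᵐ[μ] fun ω => ∫ a, f a ∂(π ω) :=
    condExp_ae_eq_integral_condDistrib hy hx.aemeasurable hf.stronglyMeasurable h_int
  -- g ∘ π is strongly measurable w.r.t. mπ
  have h_sm : StronglyMeasurable[MeasurableSpace.comap π inferInstance] (g ∘ π) :=
    Measurable.stronglyMeasurable (hg_meas.comp (Measurable.of_comap_le le_rfl))
  -- g ∘ π is integrable
  have h_int_gπ : Integrable (g ∘ π) μ := by
    refine Integrable.mono' (integrable_const C) (hg_meas.comp hπ_meas).aestronglyMeasurable ?_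
    refine Filter.Eventually.of_forall fun ω => ?_
    have := hπ_prob ω
    rw [Function.comp_apply, hg_eq (π ω) (hπ_prob ω)]
    calc ‖∫ a, f a ∂(π ω)‖ ≤ C * ((π ω) Set.univ).toReal :=
          norm_integral_le_of_norm_le_const
            (Filter.Eventually.of_forall fun a => by simpa using hC a)
      _ = C := by simp
  -- chain of a.e. equalities
  calc μ[(fun ω => f (x ω)) | MeasurableSpace.comap y inferInstance]
      =ᵐ[μ] fun ω => ∫ a, f a ∂(π ω) := h1
    _ =ᵐ[μ] μ[g ∘ π | MeasurableSpace.comap π inferInstance] := by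
        rw [h_fun_eq]
        exact Filter.EventuallyEq.of_eq
          (condExp_of_stronglyMeasurable hmπ_le h_sm h_int_gπ).symm
    _ =ᵐ[μ] μ[μ[(fun ω => f (x ω)) | MeasurableSpace.comap y inferInstance] | MeasurableSpace.comap π inferInstance] :=
        condExp_congr_ae ((h1.trans (Filter.EventuallyEq.of_eq h_fun_eq)).symm)
    _ =ᵐ[μ] μ[(fun ω => f (x ω)) | MeasurableSpace.comap π inferInstance] := condExp_condExp_of_le hmπ_le_my hmy_le
end

section
/- Corollary (separation of estimation and quantization): Under the setting of the orthogonality decomposition, minimizing E[‖x − E[x|𝒢]‖²_Q] over sub-σ-algebras 𝒢 ⊆ ℋ generated by measurable maps from ℋ-measurable data into a fixed finite set is equivalent to minimizing E[‖m − E[m|𝒢]‖²_Q] where m = E[x|ℋ]; i.e., any quantizer of the raw observation can be replaced by a quantizer of the conditional mean m with the same induced cost up to the constant E[‖x − m‖²_Q]. -/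
open MeasureTheory Matrix

section Aux

variable {Ω : Type*} {H m0 : MeasurableSpace Ω} {μ : Measure Ω}

/-- L² membership of the conditional expectation of a real L² function. -/
lemma memLp_two_condexp [IsFiniteMeasure μ] (hH : H ≤ m0)
    {φ : Ω → ℝ} (hφ : MemLp φ 2 μ) : MemLp (μ[φ|H]) 2 μ := by
  haveI : IsFiniteMeasure (μ.trim hH) := isFiniteMeasure_trim hH
  have hg : (condExpL2 ℝ ℝ hH (hφ.toLp φ) : Ω → ℝ) =ᵐ[μ] μ[φ|H] := by
    refine ae_eq_condExp_of_forall_setIntegral_eq hH (hφ.integrable one_le_two) ?_ ?_ ?_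
    · intro s _ hμs
      exact integrableOn_Lp_of_measure_ne_top _ fact_one_le_two_ennreal.elim hμs.ne
    · intro s hs hμs
      rw [integral_condExpL2_eq_of_fin_meas_real _ hs hμs.ne]
      exact setIntegral_congr_ae (hH s hs) (hφ.coeFn_toLp.mono fun x hx _ => hx)
    · exact aestronglyMeasurable_condExpL2 hH _
  exact (Lp.memLp _).ae_eq hg

/-- Conditional expectation commutes with taking components. -/
lemma condexp_component [IsFiniteMeasure μ] (hH : H ≤ m0)
    {n : ℕ} {x : Ω → Fin n → ℝ} (hx : Integrable x μ) (i : Fin n) :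
    (fun ω => (μ[x|H]) ω i) =ᵐ[μ] μ[fun ω => x ω i|H] := by
  haveI : IsFiniteMeasure (μ.trim hH) := isFiniteMeasure_trim hH
  refine ae_eq_condExp_of_forall_setIntegral_eq hH
    ((ContinuousLinearMap.proj (R := ℝ) (φ := fun _ : Fin n => ℝ) i).integrable_comp hx)
    (fun s _ _ => ((ContinuousLinearMap.proj (R := ℝ) (φ := fun _ : Fin n => ℝ)
      i).integrable_comp integrable_condExp).integrableOn) ?_ ?_
  · intro s hs _
    have h1 := (ContinuousLinearMap.proj (R := ℝ) (φ := fun _ : Fin n => ℝ) i).integral_comp_comm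
      ((integrable_condExp (μ := μ) (f := x) (m := H)).integrableOn (s := s))
    have h2 := (ContinuousLinearMap.proj (R := ℝ) (φ := fun _ : Fin n => ℝ) i).integral_comp_comm
      (hx.integrableOn (s := s))
    simp only [ContinuousLinearMap.proj_apply] at h1 h2
    rw [h1, h2, setIntegral_condExp hH hx hs]
  · exact (((continuous_apply i).comp_stronglyMeasurable
      stronglyMeasurable_condExp)).aestronglyMeasurable

lemma integrable_mul_of_memLp_two {f g : Ω → ℝ} (hf : MemLp f 2 μ) (hg : MemLp g 2 μ) :
    Integrable (fun ω => f ω * g ω) μ := by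
  haveI : ENNReal.HolderTriple 2 2 1 := ⟨by rw [inv_one]; exact ENNReal.inv_two_add_inv_two⟩
  have h : MemLp (f • g) 1 μ := hg.smul hf
  exact (memLp_one_iff_integrable.mp h).congr (Filter.Eventually.of_forall fun ω => rfl)

/-- Orthogonality: the estimation error is orthogonal to `H`-measurable L² functions. -/
lemma integral_sub_condexp_mul_eq_zero [IsFiniteMeasure μ] (hH : H ≤ m0)
    {φ h : Ω → ℝ} (hφ : MemLp φ 2 μ) (hh : StronglyMeasurable[H] h) (hh2 : MemLp h 2 μ) :
    ∫ ω, (φ ω - (μ[φ|H]) ω) * h ω ∂μ = 0 := by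
  haveI : IsFiniteMeasure (μ.trim hH) := isFiniteMeasure_trim hH
  have hmul : Integrable (h * φ) μ := integrable_mul_of_memLp_two hh2 hφ
  have hmul2 : Integrable (fun ω => h ω * (μ[φ|H]) ω) μ :=
    integrable_mul_of_memLp_two hh2 (memLp_two_condexp hH hφ)
  have key : μ[h * φ|H] =ᵐ[μ] h * μ[φ|H] :=
    condExp_mul_of_stronglyMeasurable_left hh hmul (hφ.integrable one_le_two)
  have hint : ∫ ω, h ω * φ ω ∂μ = ∫ ω, h ω * (μ[φ|H]) ω ∂μ := by
    rw [show ∫ ω, h ω * φ ω ∂μ = ∫ ω, (h * φ) ω ∂μ from rfl,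
      ← integral_condExp hH (f := h * φ), integral_congr_ae key]
    rfl
  have heq : (fun ω => (φ ω - (μ[φ|H]) ω) * h ω)
      = fun ω => h ω * φ ω - h ω * (μ[φ|H]) ω := by funext ω; ring
  have hmul' : Integrable (fun ω => h ω * φ ω) μ := hmul
  rw [heq, integral_sub hmul' hmul2, hint, sub_self]

/-- Expansion of the integral of a quadratic form into component integrals. -/
lemma integral_quadratic_expand {n : ℕ} (Q : Matrix (Fin n) (Fin n) ℝ)
    {u v : Ω → Fin n → ℝ} (hu : ∀ i, MemLp (fun ω => u ω i) 2 μ)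
    (hv : ∀ j, MemLp (fun ω => v ω j) 2 μ) :
    ∫ ω, (u ω) ⬝ᵥ Q *ᵥ (v ω) ∂μ = ∑ i, ∑ j, Q i j * ∫ ω, u ω i * v ω j ∂μ := by
  have hint : ∀ i j, Integrable (fun ω => Q i j * (u ω i * v ω j)) μ := fun i j =>
    (integrable_mul_of_memLp_two (hu i) (hv j)).const_mul _
  have hpt : ∀ ω, (u ω) ⬝ᵥ Q *ᵥ (v ω) = ∑ i, ∑ j, Q i j * (u ω i * v ω j) := by
    intro ω
    simp only [dotProduct, mulVec, Finset.mul_sum]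
    exact Finset.sum_congr rfl fun i _ => Finset.sum_congr rfl fun j _ => by ring
  simp_rw [hpt]
  rw [integral_finset_sum _ fun i _ => integrable_finset_sum _ fun j _ => hint i j]
  refine Finset.sum_congr rfl fun i _ => ?_
  rw [integral_finset_sum _ fun j _ => hint i j]
  exact Finset.sum_congr rfl fun j _ => integral_const_mul _ _

end Aux

/-- Separation of estimation and quantization: for any quantizer `f` of the raw data
(an `ℋ`-measurable map into a finite set `M`) generating `𝒢 = σ(f)`, the weighted
quadratic cost decomposes as the constant estimation error `E[‖x − m‖²_Q]` with
`m = E[x|ℋ]` plus the cost `E[‖m − E[m|𝒢]‖²_Q]` of quantizing the estimate `m`. -/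
theorem separation_of_estimation_and_quantization
    {Ω M : Type*} {m0 : MeasurableSpace Ω} (μ : Measure Ω) [IsProbabilityMeasure μ]
    {n : ℕ} (Q : Matrix (Fin n) (Fin n) ℝ) (hQ : Q.PosDef)
    (H : MeasurableSpace Ω) (hH : H ≤ m0)
    [Fintype M] [MeasurableSpace M] [MeasurableSingletonClass M]
    (f : Ω → M) (hf : @Measurable Ω M H _ f)
    (x : Ω → (Fin n → ℝ)) (hx : MemLp x 2 μ) :
    ∀ G : MeasurableSpace Ω, G = MeasurableSpace.comap f inferInstance →
    ∀ m : Ω → (Fin n → ℝ), m = μ[x|H] →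
    ∫ ω, (x ω - (μ[x|G]) ω) ⬝ᵥ Q *ᵥ (x ω - (μ[x|G]) ω) ∂μ
      = ∫ ω, (x ω - m ω) ⬝ᵥ Q *ᵥ (x ω - m ω) ∂μ
        + ∫ ω, (m ω - (μ[m|G]) ω) ⬝ᵥ Q *ᵥ (m ω - (μ[m|G]) ω) ∂μ := by
  intro G hGdef m hmdef
  have hGH : G ≤ H := hGdef ▸ hf.comap_le
  have hG : G ≤ m0 := hGH.trans hH
  haveI : IsFiniteMeasure (μ.trim hH) := isFiniteMeasure_trim hH
  haveI : IsFiniteMeasure (μ.trim hG) := isFiniteMeasure_trim hG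
  have hxint : Integrable x μ := hx.integrable one_le_two
  have hX : ∀ i, MemLp (fun ω => x ω i) 2 μ := fun i =>
    (ContinuousLinearMap.proj (R := ℝ) (φ := fun _ : Fin n => ℝ) i).comp_memLp' hx
  have hmx : ∀ i, (fun ω => m ω i) =ᵐ[μ] μ[fun ω => x ω i|H] := by
    intro i; rw [hmdef]; exact condexp_component hH hxint i
  have hM : ∀ i, MemLp (fun ω => m ω i) 2 μ := fun i =>
    (memLp_two_condexp hH (hX i)).ae_eq (hmx i).symm
  have hgx : ∀ i, (fun ω => (μ[x|G]) ω i) =ᵐ[μ] μ[fun ω => x ω i|G] := fun i =>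
    condexp_component hG hxint i
  have hGc : ∀ i, MemLp (fun ω => (μ[x|G]) ω i) 2 μ := fun i =>
    (memLp_two_condexp hG (hX i)).ae_eq (hgx i).symm
  have hDsm : ∀ j, StronglyMeasurable[H] (fun ω => m ω j - (μ[x|G]) ω j) := by
    intro j
    have h1 : StronglyMeasurable[H] m := hmdef ▸ stronglyMeasurable_condExp
    have h2 : StronglyMeasurable[H] (μ[x|G]) := stronglyMeasurable_condExp.mono hGH
    exact ((continuous_apply j).comp_stronglyMeasurable h1).sub
      ((continuous_apply j).comp_stronglyMeasurable h2)
  have hD : ∀ j, MemLp (fun ω => m ω j - (μ[x|G]) ω j) 2 μ := fun j => (hM j).sub (hGc j)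
  have hE : ∀ i, MemLp (fun ω => x ω i - m ω i) 2 μ := fun i => (hX i).sub (hM i)
  have hcross : ∀ i j, ∫ ω, (x ω i - m ω i) * (m ω j - (μ[x|G]) ω j) ∂μ = 0 := by
    intro i j
    have hae : (fun ω => (x ω i - m ω i) * (m ω j - (μ[x|G]) ω j)) =ᵐ[μ]
        fun ω => (x ω i - (μ[fun ω' => x ω' i|H]) ω) * (m ω j - (μ[x|G]) ω j) := by
      filter_upwards [hmx i] with ω hω
      rw [hω]
    rw [integral_congr_ae hae]
    exact integral_sub_condexp_mul_eq_zero hH (hX i) (hDsm j) (hD j)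
  have htower : μ[m|G] =ᵐ[μ] μ[x|G] := by
    rw [hmdef]; exact condExp_condExp_of_le hGH hH
  have hthird : ∫ ω, (m ω - (μ[m|G]) ω) ⬝ᵥ Q *ᵥ (m ω - (μ[m|G]) ω) ∂μ
      = ∫ ω, (m ω - (μ[x|G]) ω) ⬝ᵥ Q *ᵥ (m ω - (μ[x|G]) ω) ∂μ := by
    refine integral_congr_ae ?_
    filter_upwards [htower] with ω hω
    rw [hω]
  have hLHS : ∫ ω, (x ω - (μ[x|G]) ω) ⬝ᵥ Q *ᵥ (x ω - (μ[x|G]) ω) ∂μ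
      = ∑ i, ∑ j, Q i j * ∫ ω, (x ω i - (μ[x|G]) ω i) * (x ω j - (μ[x|G]) ω j) ∂μ :=
    integral_quadratic_expand Q (fun i => (hX i).sub (hGc i)) (fun j => (hX j).sub (hGc j))
  have hR1 : ∫ ω, (x ω - m ω) ⬝ᵥ Q *ᵥ (x ω - m ω) ∂μ
      = ∑ i, ∑ j, Q i j * ∫ ω, (x ω i - m ω i) * (x ω j - m ω j) ∂μ :=
    integral_quadratic_expand Q (fun i => hE i) (fun j => hE j)
  have hR2 : ∫ ω, (m ω - (μ[x|G]) ω) ⬝ᵥ Q *ᵥ (m ω - (μ[x|G]) ω) ∂μ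
      = ∑ i, ∑ j, Q i j * ∫ ω, (m ω i - (μ[x|G]) ω i) * (m ω j - (μ[x|G]) ω j) ∂μ :=
    integral_quadratic_expand Q (fun i => hD i) (fun j => hD j)
  have hsplit : ∀ i j, ∫ ω, (x ω i - (μ[x|G]) ω i) * (x ω j - (μ[x|G]) ω j) ∂μ
      = ∫ ω, (x ω i - m ω i) * (x ω j - m ω j) ∂μ
        + ∫ ω, (m ω i - (μ[x|G]) ω i) * (m ω j - (μ[x|G]) ω j) ∂μ := by
    intro i j
    have hc2 : ∫ ω, (m ω i - (μ[x|G]) ω i) * (x ω j - m ω j) ∂μ = 0 := by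
      rw [integral_congr_ae (Filter.Eventually.of_forall
        (fun ω => mul_comm (m ω i - (μ[x|G]) ω i) (x ω j - m ω j)))]
      exact hcross j i
    have hpt : (fun ω => (x ω i - (μ[x|G]) ω i) * (x ω j - (μ[x|G]) ω j))
        = fun ω => (x ω i - m ω i) * (x ω j - m ω j)
          + ((x ω i - m ω i) * (m ω j - (μ[x|G]) ω j)
          + ((m ω i - (μ[x|G]) ω i) * (x ω j - m ω j)
          + (m ω i - (μ[x|G]) ω i) * (m ω j - (μ[x|G]) ω j))) := by
      funext ω; ring
    have i1 := integrable_mul_of_memLp_two (hE i) (hE j)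
    have i2 := integrable_mul_of_memLp_two (hE i) (hD j)
    have i3 := integrable_mul_of_memLp_two (hD i) (hE j)
    have i4 := integrable_mul_of_memLp_two (hD i) (hD j)
    have e3 : ∫ ω, ((m ω i - (μ[x|G]) ω i) * (x ω j - m ω j)
          + (m ω i - (μ[x|G]) ω i) * (m ω j - (μ[x|G]) ω j)) ∂μ
        = (∫ ω, (m ω i - (μ[x|G]) ω i) * (x ω j - m ω j) ∂μ)
          + ∫ ω, (m ω i - (μ[x|G]) ω i) * (m ω j - (μ[x|G]) ω j) ∂μ := integral_add i3 i4
    have e2 : ∫ ω, ((x ω i - m ω i) * (m ω j - (μ[x|G]) ω j)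
          + ((m ω i - (μ[x|G]) ω i) * (x ω j - m ω j)
          + (m ω i - (μ[x|G]) ω i) * (m ω j - (μ[x|G]) ω j))) ∂μ
        = (∫ ω, (x ω i - m ω i) * (m ω j - (μ[x|G]) ω j) ∂μ)
          + ∫ ω, ((m ω i - (μ[x|G]) ω i) * (x ω j - m ω j)
          + (m ω i - (μ[x|G]) ω i) * (m ω j - (μ[x|G]) ω j)) ∂μ := integral_add i2 (i3.add i4)
    have e1 : ∫ ω, ((x ω i - m ω i) * (x ω j - m ω j)
          + ((x ω i - m ω i) * (m ω j - (μ[x|G]) ω j)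
          + ((m ω i - (μ[x|G]) ω i) * (x ω j - m ω j)
          + (m ω i - (μ[x|G]) ω i) * (m ω j - (μ[x|G]) ω j)))) ∂μ
        = (∫ ω, (x ω i - m ω i) * (x ω j - m ω j) ∂μ)
          + ∫ ω, ((x ω i - m ω i) * (m ω j - (μ[x|G]) ω j)
          + ((m ω i - (μ[x|G]) ω i) * (x ω j - m ω j)
          + (m ω i - (μ[x|G]) ω i) * (m ω j - (μ[x|G]) ω j))) ∂μ :=
      integral_add i1 (i2.add (i3.add i4))
    rw [hpt, e1, e2, e3, hcross i j, hc2]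
    ring
  rw [hthird, hLHS, hR1, hR2]
  simp_rw [hsplit, mul_add]
  rw [← Finset.sum_add_distrib]
  exact Finset.sum_congr rfl fun i _ => Finset.sum_add_distrib
end

section
/- Counterexample computation, part 2 (lower bound): Let z₁, z₂, z₃ be independent uniform Bernoulli random variables. If a decoder's estimate v is a measurable function of (z₁, z₂ ⊕ z₃) only, then E[(z₃ − v)²] ≥ 1/4, with the minimum attained by v ≡ 1/2. -/
open MeasureTheory ProbabilityTheory

/-- Counterexample, lower bound: if the decoder's estimate is a function of
`(z₁, z₂ ⊕ z₃)` only, then the quadratic error of estimating `z₃` is at least `1/4`,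
and the constant estimate `1/2` attains it. -/
theorem counterexample_lower_bound
    {Ω : Type*} [MeasurableSpace Ω] (μ : Measure Ω) [IsProbabilityMeasure μ]
    (z₁ z₂ z₃ : Ω → Bool) (h₁ : Measurable z₁) (h₂ : Measurable z₂) (h₃ : Measurable z₃)
    (hind : iIndepFun ![z₁, z₂, z₃] μ)
    (hunif : ∀ i : Fin 3, μ ((![z₁, z₂, z₃] i) ⁻¹' {true}) = 1 / 2) :
    (∀ v : Bool → Bool → ℝ,
      (1 : ℝ) / 4 ≤ ∫ ω, ((if z₃ ω then (1 : ℝ) else 0) - v (z₁ ω) (xor (z₂ ω) (z₃ ω))) ^ 2 ∂μ) ∧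
    ∫ ω, ((if z₃ ω then (1 : ℝ) else 0) - 1 / 2) ^ 2 ∂μ = 1 / 4 := by
  have hm : ∀ i : Fin 3, Measurable (![z₁, z₂, z₃] i) := by
    intro i; fin_cases i
    · exact h₁
    · exact h₂
    · exact h₃
  -- each variable takes value `b` with probability 1/2
  have huniv : ∀ i : Fin 3, ∀ b : Bool, μ ((![z₁, z₂, z₃] i) ⁻¹' {b}) = 1 / 2 := by
    intro i b
    cases b
    · have hc : (![z₁, z₂, z₃] i) ⁻¹' {false} = ((![z₁, z₂, z₃] i) ⁻¹' {true})ᶜ := by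
        ext ω
        simp only [Set.mem_preimage, Set.mem_singleton_iff, Set.mem_compl_iff,
          Bool.not_eq_true]
      rw [hc, measure_compl ((hm i) (measurableSet_singleton _)) (measure_ne_top μ _),
        hunif i, measure_univ]
      exact ENNReal.sub_half ENNReal.one_ne_top
    · exact hunif i
  set T : Ω → Bool × Bool × Bool := fun ω => (z₁ ω, (z₂ ω, z₃ ω)) with hTdef
  have hTm : Measurable T := h₁.prodMk (h₂.prodMk h₃)
  have key : ∀ p : Bool × Bool × Bool, (μ.map T) {p} = 1 / 8 := by
    rintro ⟨a, b, c⟩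
    rw [Measure.map_apply hTm (measurableSet_singleton _)]
    have hset : T ⁻¹' {(a, b, c)} =
        ⋂ i : Fin 3, (![z₁, z₂, z₃] i) ⁻¹' {![a, b, c] i} := by
      ext ω
      simp [hTdef, Fin.forall_fin_succ, Prod.ext_iff, and_assoc]
    rw [hset, hind.meas_iInter (fun i => ⟨{![a, b, c] i}, measurableSet_singleton _, rfl⟩)]
    have : ∀ i : Fin 3, μ ((![z₁, z₂, z₃] i) ⁻¹' {![a, b, c] i}) = 1 / 2 :=
      fun i => huniv i _
    simp only [this]
    rw [Fin.prod_const]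
    rw [show ((1 : ENNReal) / 2) = 2⁻¹ by rw [one_div], ← ENNReal.inv_pow]
    norm_num
  have hint : ∀ g : Bool × Bool × Bool → ℝ,
      ∫ ω, g (T ω) ∂μ = ∑ p : Bool × Bool × Bool, (1 / 8 : ℝ) * g p := by
    intro g
    have hmg : Measurable g := measurable_of_countable g
    rw [← integral_map hTm.aemeasurable hmg.aestronglyMeasurable,
      integral_fintype (Integrable.of_finite)]
    refine Finset.sum_congr rfl fun p _ => ?_
    rw [measureReal_def, key p]
    norm_num [ENNReal.toReal_div]
  constructor
  · intro v
    have := hint (fun p => ((if p.2.2 then (1 : ℝ) else 0) - v p.1 (xor p.2.1 p.2.2)) ^ 2)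
    rw [show (fun ω => ((if z₃ ω then (1 : ℝ) else 0) - v (z₁ ω) (xor (z₂ ω) (z₃ ω))) ^ 2)
        = fun ω => ((if (T ω).2.2 then (1 : ℝ) else 0)
            - v (T ω).1 (xor (T ω).2.1 (T ω).2.2)) ^ 2 from rfl]
    rw [this]
    simp only [Fintype.sum_prod_type, Fintype.sum_bool]
    norm_num
    nlinarith [sq_nonneg (v true true - 1/2), sq_nonneg (v true false - 1/2),
      sq_nonneg (v false true - 1/2), sq_nonneg (v false false - 1/2)]
  · have := hint (fun p => ((if p.2.2 then (1 : ℝ) else 0) - 1 / 2) ^ 2)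
    rw [show (fun ω => ((if z₃ ω then (1 : ℝ) else 0) - 1 / 2) ^ 2)
        = fun ω => ((if (T ω).2.2 then (1 : ℝ) else 0) - 1 / 2) ^ 2 from rfl]
    rw [this]
    simp only [Fintype.sum_prod_type, Fintype.sum_bool]
    norm_num
end
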